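/- (Core of Theorem 3: Laplace-kernel smoothing approximates the circuit state) For every θ ∈ ℝ^K and every τ > 0, ‖ψ_τ(θ) − φ(θ)‖₂ ≤ Kξ/τ; consequently ‖ψ_τ(θ)‖₂ ≥ 1 − Kξ/τ, and for τ > Kξ the normalized vector ψ_τ(θ)/‖ψ_τ(θ)‖₂ converges to φ(θ) in the ℓ² norm as τ → ∞. -/

import Mathlib

section Stmt5Aux
open MeasureTheory Set Real

lemma myIntegrable_comp_abs {f : ℝ → ℝ} (hf : IntegrableOn f (Ioi 0)) :
    Integrable fun x : ℝ => f |x| := by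
  have hIoi : IntegrableOn (fun x : ℝ => f |x|) (Ioi 0) := by
    refine hf.congr_fun (fun x hx => ?_) measurableSet_Ioi
    rw [abs_eq_self.mpr (le_of_lt hx)]
  have int_Iic : IntegrableOn (fun x : ℝ ↦ f |x|) (Iic 0) := by
    rw [← Measure.map_neg_eq_self (volume : Measure ℝ)]
    let m : MeasurableEmbedding fun x : ℝ => -x := (Homeomorph.neg ℝ).measurableEmbedding
    rw [m.integrableOn_map_iff]
    simp_rw [Function.comp_def, abs_neg, neg_preimage, neg_Iic, neg_zero]
    exact (integrableOn_Ici_iff_integrableOn_Ioi (f := fun x : ℝ => f |x|) (b := 0)).mpr hIoi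
  have := int_Iic.union hIoi
  rwa [Iic_union_Ioi, integrableOn_univ] at this

lemma myInt_exp_Ioi {τ : ℝ} (hτ : 0 < τ) :
    ∫ x : ℝ in Ioi 0, Real.exp (-(τ * x)) = 1 / τ := by
  have := integral_rpow_mul_exp_neg_mul_Ioi (a := 1) (r := τ) one_pos hτ
  simpa using this

lemma myInt_x_exp_Ioi {τ : ℝ} (hτ : 0 < τ) :
    ∫ x : ℝ in Ioi 0, x * Real.exp (-(τ * x)) = 1 / τ ^ 2 := by
  have := integral_rpow_mul_exp_neg_mul_Ioi (a := 2) (r := τ) two_pos hτ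
  simp only [show (2:ℝ) - 1 = 1 by norm_num, Real.rpow_one, Real.Gamma_two, mul_one] at this
  rw [this, show ((2:ℝ)) = ((2:ℕ):ℝ) by norm_num, Real.rpow_natCast]
  ring

lemma myInt1 {τ : ℝ} (hτ : 0 < τ) (c : ℝ) :
    ∫ x : ℝ, Real.exp (-(τ * |x - c|)) = 2 / τ := by
  rw [show (fun x : ℝ => Real.exp (-(τ * |x - c|)))
      = fun x : ℝ => (fun y : ℝ => Real.exp (-(τ * |y|))) (x - c) from rfl,
    integral_sub_right_eq_self (fun y : ℝ => Real.exp (-(τ * |y|))) c,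
    integral_comp_abs (f := fun y : ℝ => Real.exp (-(τ * y))), myInt_exp_Ioi hτ]
  ring

lemma myInt2 {τ : ℝ} (hτ : 0 < τ) (c : ℝ) :
    ∫ x : ℝ, |x - c| * Real.exp (-(τ * |x - c|)) = 2 / τ ^ 2 := by
  rw [show (fun x : ℝ => |x - c| * Real.exp (-(τ * |x - c|)))
      = fun x : ℝ => (fun y : ℝ => |y| * Real.exp (-(τ * |y|))) (x - c) from rfl,
    integral_sub_right_eq_self (fun y : ℝ => |y| * Real.exp (-(τ * |y|))) c,
    integral_comp_abs (f := fun y : ℝ => y * Real.exp (-(τ * y))), myInt_x_exp_Ioi hτ]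
  ring

lemma myIntgr1 {τ : ℝ} (hτ : 0 < τ) (c : ℝ) :
    Integrable fun x : ℝ => Real.exp (-(τ * |x - c|)) := by
  have h : Integrable fun x : ℝ => Real.exp (-(τ * |x|)) := by
    apply myIntegrable_comp_abs (f := fun y : ℝ => Real.exp (-(τ * y)))
    simpa [neg_mul] using exp_neg_integrableOn_Ioi 0 hτ
  exact h.comp_sub_right c

lemma myIntgr2 {τ : ℝ} (hτ : 0 < τ) (c : ℝ) :
    Integrable fun x : ℝ => |x - c| * Real.exp (-(τ * |x - c|)) := by
  have h : Integrable fun x : ℝ => |x| * Real.exp (-(τ * |x|)) := by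
    apply myIntegrable_comp_abs (f := fun y : ℝ => y * Real.exp (-(τ * y)))
    have := integrableOn_rpow_mul_exp_neg_mul_rpow (p := 1) (s := 1) (b := τ)
      (by norm_num) one_pos hτ
    simpa [Real.rpow_one, neg_mul] using this
  exact h.comp_sub_right c

noncomputable def lapF (K : ℕ) (τ : ℝ) (θ θ' : Fin K → ℝ) : ℝ :=
  Real.exp (-τ * ∑ i, |θ' i - θ i|)

lemma lapF_pos (K : ℕ) (τ : ℝ) (θ θ' : Fin K → ℝ) : 0 < lapF K τ θ θ' := Real.exp_pos _

lemma lapF_prod (K : ℕ) (τ : ℝ) (θ θ' : Fin K → ℝ) :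
    lapF K τ θ θ' = ∏ i, Real.exp (-(τ * |θ' i - θ i|)) := by
  rw [lapF, ← Real.exp_sum]
  congr 1
  rw [neg_mul, Finset.mul_sum, ← Finset.sum_neg_distrib]

lemma stmt5_core (K d : ℕ) (hK : 0 < K) (ξ : ℝ) (hξ : 0 < ξ)
    (φ : (Fin K → ℝ) → EuclideanSpace ℂ (Fin d))
    (hunit : ∀ θ, ‖φ θ‖ = 1)
    (hlip : ∀ θ θ', ‖φ θ' - φ θ‖ ≤ ξ * ∑ i, |θ' i - θ i|)
    (θ : Fin K → ℝ) (τ : ℝ) (hτ : 0 < τ) :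
    ‖((τ / 2) ^ K • ∫ θ' : Fin K → ℝ, lapF K τ θ θ' • φ θ') - φ θ‖ ≤ K * ξ / τ := by
  -- continuity of φ
  have hφc : Continuous φ := by
    have : LipschitzWith (Real.toNNReal (ξ * K)) φ := by
      apply LipschitzWith.of_dist_le_mul
      intro a b
      rw [dist_eq_norm, Real.coe_toNNReal _ (by positivity)]
      calc ‖φ a - φ b‖ ≤ ξ * ∑ i, |a i - b i| := hlip b a
        _ ≤ ξ * ∑ _i : Fin K, dist a b := by
            gcongr with i _
            rw [← Real.dist_eq]
            exact dist_le_pi_dist a b i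
        _ = ξ * K * dist a b := by
            rw [Finset.sum_const, Finset.card_univ, Fintype.card_fin, nsmul_eq_mul]; ring
    exact this.continuous
  have hFc : Continuous fun θ' => lapF K τ θ θ' := by
    apply Real.continuous_exp.comp
    exact continuous_const.mul
      (continuous_finset_sum _ fun i _ => ((continuous_apply i).sub continuous_const).abs)
  -- integrability and value of ∫ lapF
  have hFint : Integrable fun θ' : Fin K → ℝ => lapF K τ θ θ' := by
    have h := Integrable.fintype_prod (f := fun (i : Fin K) (x : ℝ) =>
      Real.exp (-(τ * |x - θ i|))) (fun i => myIntgr1 hτ (θ i))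
    exact h.congr (Filter.Eventually.of_forall fun θ' => (lapF_prod K τ θ θ').symm)
  have key1 : ∫ θ' : Fin K → ℝ, lapF K τ θ θ' = (2 / τ) ^ K := by
    rw [show (fun θ' : Fin K → ℝ => lapF K τ θ θ')
        = fun θ' => ∏ i, (fun x : ℝ => Real.exp (-(τ * |x - θ i|))) (θ' i) from
        funext fun θ' => lapF_prod K τ θ θ']
    erw [MeasureTheory.integral_fintype_prod_eq_prod
      (fun i (x : ℝ) => Real.exp (-(τ * |x - θ i|)))]
    rw [Finset.prod_congr rfl fun i _ => myInt1 hτ (θ i), Finset.prod_const,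
      Finset.card_univ, Fintype.card_fin]
  -- per-coordinate terms
  have term : ∀ i : Fin K,
      (∫ θ' : Fin K → ℝ, |θ' i - θ i| * lapF K τ θ θ') = 2 / τ ^ 2 * (2 / τ) ^ (K - 1) ∧
      Integrable fun θ' : Fin K → ℝ => |θ' i - θ i| * lapF K τ θ θ' := by
    intro i
    set g : Fin K → ℝ → ℝ :=
      fun j x => (if j = i then |x - θ j| else 1) * Real.exp (-(τ * |x - θ j|)) with hg
    have hgud : ∀ θ' : Fin K → ℝ, |θ' i - θ i| * lapF K τ θ θ' = ∏ j, g j (θ' j) := by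
      intro θ'
      rw [lapF_prod K τ θ θ']
      simp only [hg]
      rw [Finset.prod_mul_distrib]
      congr 1
      rw [Finset.prod_ite_eq' Finset.univ i (fun j => |θ' j - θ j|)]
      simp
    have hgint : ∀ j, Integrable (g j) := by
      intro j
      by_cases h : j = i
      · simpa [hg, h] using myIntgr2 hτ (θ j)
      · simpa [hg, h] using myIntgr1 hτ (θ j)
    have hintp : Integrable fun θ' : Fin K → ℝ => ∏ j, g j (θ' j) :=
      Integrable.fintype_prod hgint
    constructor
    · rw [show (fun θ' : Fin K → ℝ => |θ' i - θ i| * lapF K τ θ θ')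
          = fun θ' => ∏ j, g j (θ' j) from funext hgud]
      erw [MeasureTheory.integral_fintype_prod_eq_prod g]
      have hval : ∀ j, (∫ x : ℝ, g j x) = if j = i then 2 / τ ^ 2 else 2 / τ := by
        intro j
        by_cases h : j = i
        · subst h
          rw [if_pos rfl]
          simpa [hg] using myInt2 hτ (θ j)
        · rw [if_neg h]
          simpa [hg, h] using myInt1 hτ (θ j)
      rw [Finset.prod_congr rfl fun j _ => hval j,
        ← Finset.mul_prod_erase Finset.univ _ (Finset.mem_univ i), if_pos rfl]
      congr 1
      rw [Finset.prod_congr rfl fun j hj => if_neg (Finset.ne_of_mem_erase hj),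
        Finset.prod_const, Finset.card_erase_of_mem (Finset.mem_univ i),
        Finset.card_univ, Fintype.card_fin]
    · exact hintp.congr (Filter.Eventually.of_forall fun θ' => (hgud θ').symm)
  -- sum version
  have hsum_eq : (fun θ' : Fin K → ℝ => (∑ i, |θ' i - θ i|) * lapF K τ θ θ')
      = fun θ' => ∑ i, |θ' i - θ i| * lapF K τ θ θ' := by
    funext θ'; rw [Finset.sum_mul]
  have hsum_int : Integrable fun θ' : Fin K → ℝ => (∑ i, |θ' i - θ i|) * lapF K τ θ θ' := by
    rw [hsum_eq]
    exact integrable_finset_sum _ fun i _ => (term i).2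
  have hsum_val : (∫ θ' : Fin K → ℝ, (∑ i, |θ' i - θ i|) * lapF K τ θ θ')
      = K * (2 / τ ^ 2 * (2 / τ) ^ (K - 1)) := by
    rw [hsum_eq, integral_finset_sum _ fun i _ => (term i).2,
      Finset.sum_congr rfl fun i _ => (term i).1, Finset.sum_const, Finset.card_univ,
      Fintype.card_fin, nsmul_eq_mul]
  -- integrabilities of vector-valued functions
  have Iφ : Integrable fun θ' : Fin K → ℝ => lapF K τ θ θ' • φ θ' := by
    refine hFint.mono' (hFc.smul hφc).aestronglyMeasurable ?_
    refine Filter.Eventually.of_forall fun θ' => ?_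
    rw [norm_smul, Real.norm_eq_abs, abs_of_pos (lapF_pos K τ θ θ'), hunit θ', mul_one]
  have Iconst : Integrable fun θ' : Fin K → ℝ => lapF K τ θ θ' • φ θ := hFint.smul_const (φ θ)
  -- the difference formula
  have hpow1 : (τ / 2) ^ K * (2 / τ) ^ K = 1 := by
    rw [← mul_pow, show τ / 2 * (2 / τ) = 1 by field_simp, one_pow]
  have hdiff : ∫ θ' : Fin K → ℝ, lapF K τ θ θ' • (φ θ' - φ θ)
      = (∫ θ' : Fin K → ℝ, lapF K τ θ θ' • φ θ') - (2 / τ) ^ K • φ θ := by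
    calc ∫ θ' : Fin K → ℝ, lapF K τ θ θ' • (φ θ' - φ θ)
        = ∫ θ' : Fin K → ℝ, (lapF K τ θ θ' • φ θ' - lapF K τ θ θ' • φ θ) := by
          simp_rw [smul_sub]
      _ = (∫ θ' : Fin K → ℝ, lapF K τ θ θ' • φ θ')
          - ∫ θ' : Fin K → ℝ, lapF K τ θ θ' • φ θ := integral_sub Iφ Iconst
      _ = (∫ θ' : Fin K → ℝ, lapF K τ θ θ' • φ θ') - (2 / τ) ^ K • φ θ := by
          rw [integral_smul_const, key1]
  have hψφ : ((τ / 2) ^ K • ∫ θ' : Fin K → ℝ, lapF K τ θ θ' • φ θ') - φ θ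
      = (τ / 2) ^ K • ∫ θ' : Fin K → ℝ, lapF K τ θ θ' • (φ θ' - φ θ) := by
    rw [hdiff, smul_sub, smul_smul, hpow1, one_smul]
  -- the norm bound
  have hnorm : ‖∫ θ' : Fin K → ℝ, lapF K τ θ θ' • (φ θ' - φ θ)‖
      ≤ ∫ θ' : Fin K → ℝ, ξ * ((∑ i, |θ' i - θ i|) * lapF K τ θ θ') := by
    refine norm_integral_le_of_norm_le (hsum_int.const_mul ξ) ?_
    refine Filter.Eventually.of_forall fun θ' => ?_
    rw [norm_smul, Real.norm_eq_abs, abs_of_pos (lapF_pos K τ θ θ')]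
    calc lapF K τ θ θ' * ‖φ θ' - φ θ‖
        ≤ lapF K τ θ θ' * (ξ * ∑ i, |θ' i - θ i|) := by
          have := hlip θ θ'
          have h0 := (lapF_pos K τ θ θ').le
          nlinarith
      _ = ξ * ((∑ i, |θ' i - θ i|) * lapF K τ θ θ') := by ring
  have hdomval : (∫ θ' : Fin K → ℝ, ξ * ((∑ i, |θ' i - θ i|) * lapF K τ θ θ'))
      = ξ * (K * (2 / τ ^ 2 * (2 / τ) ^ (K - 1))) := by
    rw [integral_const_mul, hsum_val]
  have hpow2 : (τ / 2) ^ K * (2 / τ ^ 2 * (2 / τ) ^ (K - 1)) = 1 / τ := by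
    obtain ⟨m, rfl⟩ : ∃ m, K = m + 1 := ⟨K - 1, (Nat.succ_pred_eq_of_pos hK).symm⟩
    rw [Nat.add_sub_cancel, pow_succ]
    have h1 : (τ / 2) ^ m * (2 / τ) ^ m = 1 := by
      rw [← mul_pow, show τ / 2 * (2 / τ) = 1 by field_simp, one_pow]
    have h2 : τ / 2 * (2 / τ ^ 2) = 1 / τ := by field_simp
    calc (τ / 2) ^ m * (τ / 2) * (2 / τ ^ 2 * (2 / τ) ^ m)
        = ((τ / 2) ^ m * (2 / τ) ^ m) * (τ / 2 * (2 / τ ^ 2)) := by ring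
      _ = 1 / τ := by rw [h1, h2, one_mul]
  calc ‖((τ / 2) ^ K • ∫ θ' : Fin K → ℝ, lapF K τ θ θ' • φ θ') - φ θ‖
      = (τ / 2) ^ K * ‖∫ θ' : Fin K → ℝ, lapF K τ θ θ' • (φ θ' - φ θ)‖ := by
        rw [hψφ, norm_smul, Real.norm_eq_abs, abs_of_pos (by positivity)]
    _ ≤ (τ / 2) ^ K * (ξ * (K * (2 / τ ^ 2 * (2 / τ) ^ (K - 1)))) := by
        rw [← hdomval]
        exact mul_le_mul_of_nonneg_left hnorm (by positivity)
    _ = (ξ * K) * ((τ / 2) ^ K * (2 / τ ^ 2 * (2 / τ) ^ (K - 1))) := by ring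
    _ = K * ξ / τ := by rw [hpow2]; ring

end Stmt5Aux


open MeasureTheory

/-- (Core of Theorem 3: Laplace-kernel smoothing approximates the circuit state) Let
`φ : ℝ^K → ℂ^d` take unit values and satisfy `‖φ(θ′) − φ(θ)‖₂ ≤ ξ·‖θ′ − θ‖₁`, and let
`ψ_τ(θ) = (τ/2)^K ∫ e^{−τ‖θ′−θ‖₁} φ(θ′) dθ′` be the Laplace-kernel average. Then for
every `θ` and every `τ > 0`, `‖ψ_τ(θ) − φ(θ)‖₂ ≤ Kξ/τ` and `‖ψ_τ(θ)‖₂ ≥ 1 − Kξ/τ`,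
and the normalized vector `ψ_τ(θ)/‖ψ_τ(θ)‖₂` converges to `φ(θ)` as `τ → ∞`. -/
theorem stmt5 (K d : ℕ) (hK : 0 < K) (hd : 0 < d) (ξ : ℝ) (hξ : 0 < ξ)
    (φ : (Fin K → ℝ) → EuclideanSpace ℂ (Fin d))
    (hunit : ∀ θ, ‖φ θ‖ = 1)
    (hlip : ∀ θ θ', ‖φ θ' - φ θ‖ ≤ ξ * ∑ i, |θ' i - θ i|)
    (ψ : ℝ → (Fin K → ℝ) → EuclideanSpace ℂ (Fin d))
    (hψ : ∀ τ θ, ψ τ θ =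
      (τ / 2) ^ K • ∫ θ' : Fin K → ℝ,
        Real.exp (-τ * ∑ i, |θ' i - θ i|) • φ θ') :
    ∀ θ,
      (∀ τ : ℝ, 0 < τ →
        ‖ψ τ θ - φ θ‖ ≤ K * ξ / τ ∧ 1 - K * ξ / τ ≤ ‖ψ τ θ‖) ∧
      Filter.Tendsto (fun τ : ℝ => (‖ψ τ θ‖)⁻¹ • ψ τ θ)
        Filter.atTop (nhds (φ θ)) := by
  intro θ
  have hb : ∀ τ : ℝ, 0 < τ → ‖ψ τ θ - φ θ‖ ≤ K * ξ / τ := by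
    intro τ hτ
    rw [hψ τ θ]
    exact stmt5_core K d hK ξ hξ φ hunit hlip θ τ hτ
  refine ⟨fun τ hτ => ⟨hb τ hτ, ?_⟩, ?_⟩
  · have h1 : ‖φ θ‖ - ‖ψ τ θ‖ ≤ ‖φ θ - ψ τ θ‖ := norm_sub_norm_le _ _
    rw [hunit θ, norm_sub_rev] at h1
    linarith [hb τ hτ]
  · have h0 : Filter.Tendsto (fun τ : ℝ => (K : ℝ) * ξ / τ) Filter.atTop (nhds 0) :=
      Filter.Tendsto.div_atTop tendsto_const_nhds Filter.tendsto_id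
    have hψt : Filter.Tendsto (fun τ => ψ τ θ) Filter.atTop (nhds (φ θ)) := by
      rw [← tendsto_sub_nhds_zero_iff]
      exact squeeze_zero_norm'
        (Filter.eventually_atTop.mpr ⟨1, fun τ hτ => hb τ (lt_of_lt_of_le one_pos hτ)⟩) h0
    have hn : Filter.Tendsto (fun τ => ‖ψ τ θ‖) Filter.atTop (nhds 1) := by
      have := (continuous_norm.tendsto (φ θ)).comp hψt
      rwa [hunit θ] at this
    have hninv : Filter.Tendsto (fun τ => (‖ψ τ θ‖)⁻¹) Filter.atTop (nhds 1) := by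
      have := hn.inv₀ one_ne_zero
      rwa [inv_one] at this
    have := hninv.smul hψt
    rwa [one_smul] at this
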